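/- Let β > 0, U ⊆ ℝⁿ open, u : U → ℝ continuous, y ∈ U, and 0 < r < dist(y, ∂U). Suppose u attains at x¹ with |x¹ - y| = r the maximum of u over the closed ball of radius r around y, and suppose u satisfies, for |x - y| ≤ r, u(x) ≤ e^{-β|x-y|}u(y) + (S/β)(1 - e^{-β|x-y|}), where S := β(u(x¹) - e^{-βr}u(y))/(1 - e^{-βr}). Then for every t ∈ [0,1], writing xᵗ = y + t(x¹ - y), one has u(x¹) - e^{-β(1-t)r} u(xᵗ) ≥ (S/β)(1 - e^{-β(1-t)r}). -/
import Mathlib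


open Real Metric

theorem increasing_slope_core {n : ℕ} (β r : ℝ) (hβ : 0 < β) (hr : 0 < r)
    (U : Set (EuclideanSpace ℝ (Fin n))) (hU : IsOpen U)
    (u : EuclideanSpace ℝ (Fin n) → ℝ) (hu : ContinuousOn u U)
    (y : EuclideanSpace ℝ (Fin n)) (hy : y ∈ U)
    (hball : closedBall y r ⊆ U)
    (x₁ : EuclideanSpace ℝ (Fin n)) (hx₁ : ‖x₁ - y‖ = r)
    (hmaxpt : ∀ x : EuclideanSpace ℝ (Fin n), ‖x - y‖ ≤ r → u x ≤ u x₁)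
    (S : ℝ)
    (hS : S = β * (u x₁ - Real.exp (-β * r) * u y) / (1 - Real.exp (-β * r)))
    (hbound : ∀ x : EuclideanSpace ℝ (Fin n), ‖x - y‖ ≤ r →
      u x ≤ Real.exp (-β * ‖x - y‖) * u y + (S / β) * (1 - Real.exp (-β * ‖x - y‖))) :
    ∀ t ∈ Set.Icc (0:ℝ) 1,
      u x₁ - Real.exp (-β * (1 - t) * r) * u (y + t • (x₁ - y)) ≥
        (S / β) * (1 - Real.exp (-β * (1 - t) * r)) := by
  intro t ht
  obtain ⟨ht0, ht1⟩ := ht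
  have hnorm : ‖(y + t • (x₁ - y)) - y‖ = t * r := by
    rw [add_sub_cancel_left, norm_smul, Real.norm_eq_abs, abs_of_nonneg ht0, hx₁]
  have hle : ‖(y + t • (x₁ - y)) - y‖ ≤ r := by
    rw [hnorm]; nlinarith
  have hb := hbound _ hle
  rw [hnorm] at hb
  have hexp1 : Real.exp (-β * r) < 1 := by
    rw [Real.exp_lt_one_iff]; nlinarith
  have hpos : 0 < 1 - Real.exp (-β * r) := by linarith
  have hux : u x₁ = Real.exp (-β * r) * u y + (S / β) * (1 - Real.exp (-β * r)) := by
    have hSb : S / β = (u x₁ - Real.exp (-β * r) * u y) / (1 - Real.exp (-β * r)) := by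
      rw [hS, mul_div_assoc]
      exact mul_div_cancel_left₀ _ hβ.ne'
    have h : (S / β) * (1 - Real.exp (-β * r)) = u x₁ - Real.exp (-β * r) * u y := by
      rw [hSb, div_mul_cancel₀ _ hpos.ne']
    linarith
  have hmul : Real.exp (-β * (1 - t) * r) * Real.exp (-β * (t * r)) = Real.exp (-β * r) := by
    rw [← Real.exp_add]; ring_nf
  have hE1 : 0 < Real.exp (-β * (1 - t) * r) := Real.exp_pos _
  have hmb := mul_le_mul_of_nonneg_left hb hE1.le
  have key : Real.exp (-β * (1 - t) * r) *
      (Real.exp (-β * (t * r)) * u y + S / β * (1 - Real.exp (-β * (t * r)))) =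
      Real.exp (-β * r) * u y + S / β * Real.exp (-β * (1 - t) * r)
        - S / β * Real.exp (-β * r) := by
    rw [← hmul]; ring
  rw [key] at hmb
  have goal' : u x₁ - Real.exp (-β * (1 - t) * r) * u (y + t • (x₁ - y)) ≥
      S / β - S / β * Real.exp (-β * (1 - t) * r) := by linarith
  linarith [goal']
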